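/- Let Y > 0, α > 0, y ∈ [−Y, Y], and let targets y_1,…,y_N ∈ [−Y, Y] and features x_1,…,x_N ∈ ℝ^d be given. With g(z) = sign(z)·(Y·√(α|z|+1) − Y), the cumulative loss L(w) = ∑_{n=1}^N (g(⟨w, x_n⟩) − y_n)² is convex on ℝ^d. -/

import Mathlib

open Real Set Filter

namespace Stmt11Aux

variable {Y α y : ℝ}

/-- the scalar loss -/
noncomputable def f (Y α y : ℝ) (z : ℝ) : ℝ :=
  Real.sign z * (Y * Real.sqrt (α * |z| + 1) - Y) - y

/-- candidate derivative of `(f)²` -/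
noncomputable def D (Y α y : ℝ) (z : ℝ) : ℝ :=
  if 0 ≤ z then Y * α * (Y - (Y + y) / Real.sqrt (α * z + 1))
  else Y * α * ((Y - y) / Real.sqrt (α * (-z) + 1) - Y)

lemma sign_mul_abs (w : ℝ) : Real.sign w * |w| = w := by
  rcases lt_trichotomy w 0 with h | h | h
  · rw [Real.sign_of_neg h, abs_of_neg h]; ring
  · simp [h]
  · rw [Real.sign_of_pos h, abs_of_pos h]; ring

lemma hasDerivAt_pos (hY : 0 < Y) (hα : 0 < α) {z : ℝ} (hz : 0 < z) :
    HasDerivAt (fun z => (f Y α y z) ^ 2) (D Y α y z) z := by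
  have hpos : 0 < α * z + 1 := by positivity
  have hs : 0 < Real.sqrt (α * z + 1) := Real.sqrt_pos.2 hpos
  have h1 : HasDerivAt (fun w : ℝ => α * w + 1) α z := by
    simpa using ((hasDerivAt_id z).const_mul α).add_const 1
  have h2 := h1.sqrt hpos.ne'
  have h3 := ((h2.const_mul Y).sub_const Y).sub_const y
  have h4 := h3.pow 2
  have heq : (fun w => (Y * Real.sqrt (α * w + 1) - Y - y) ^ 2)
      =ᶠ[nhds z] (fun z => (f Y α y z) ^ 2) := by
    filter_upwards [IsOpen.mem_nhds isOpen_Ioi hz] with w hw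
    have hw' : (0:ℝ) < w := hw
    simp only [f, Real.sign_of_pos hw', abs_of_pos hw', one_mul]
  refine (h4.congr_of_eventuallyEq heq.symm).congr_deriv ?_
  rw [D, if_pos hz.le]
  have hsne : Real.sqrt (α * z + 1) ≠ 0 := hs.ne'
  field_simp
  ring

lemma hasDerivAt_neg (hY : 0 < Y) (hα : 0 < α) {z : ℝ} (hz : z < 0) :
    HasDerivAt (fun z => (f Y α y z) ^ 2) (D Y α y z) z := by
  have hpos : 0 < α * (-z) + 1 := by nlinarith [mul_pos hα (neg_pos.2 hz)]
  have hs : 0 < Real.sqrt (α * (-z) + 1) := Real.sqrt_pos.2 hpos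
  have h1 : HasDerivAt (fun w : ℝ => α * (-w) + 1) (-α) z := by
    simpa using (((hasDerivAt_id z).neg).const_mul α).add_const 1
  have h2 := h1.sqrt hpos.ne'
  have h3 := (((h2.const_mul Y).sub_const Y).neg).sub_const y
  have h4 := h3.pow 2
  have heq : (fun w => (-(Y * Real.sqrt (α * (-w) + 1) - Y) - y) ^ 2)
      =ᶠ[nhds z] (fun z => (f Y α y z) ^ 2) := by
    filter_upwards [IsOpen.mem_nhds isOpen_Iio hz] with w hw
    have hw' : w < 0 := hw
    simp only [f, Real.sign_of_neg hw', abs_of_neg hw', neg_one_mul]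
  refine (h4.congr_of_eventuallyEq heq.symm).congr_deriv ?_
  simp only [Pi.neg_apply]
  rw [D, if_neg (not_le.2 hz)]
  set s := Real.sqrt (α * (-z) + 1) with hsdef
  have hsne : s ≠ 0 := hs.ne'
  field_simp
  ring

lemma f_eq (hY : 0 < Y) (hα : 0 < α) (w : ℝ) :
    f Y α y w = Y * α * w / (1 + Real.sqrt (α * |w| + 1)) - y := by
  have harg : (0:ℝ) ≤ α * |w| + 1 := by positivity
  have hs0 : 0 < Real.sqrt (α * |w| + 1) := Real.sqrt_pos.2 (by positivity)
  have hs2 : Real.sqrt (α * |w| + 1) ^ 2 = α * |w| + 1 := Real.sq_sqrt harg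
  have hne : 1 + Real.sqrt (α * |w| + 1) ≠ 0 := by positivity
  have hw' := sign_mul_abs w
  rw [f, sub_left_inj, eq_div_iff hne]
  linear_combination (Real.sign w * Y) * hs2 + Y * α * hw'

lemma hasDerivAt_zero (hY : 0 < Y) (hα : 0 < α) :
    HasDerivAt (fun z => (f Y α y z) ^ 2) (D Y α y 0) 0 := by
  rw [hasDerivAt_iff_tendsto_slope]
  have hslope : ∀ w : ℝ, w ≠ 0 → slope (fun z => (f Y α y z) ^ 2) 0 w =
      Y * α / (1 + Real.sqrt (α * |w| + 1)) *
        (Y * α * w / (1 + Real.sqrt (α * |w| + 1)) - 2 * y) := by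
    intro w hw
    have hf0 : f Y α y 0 = -y := by simp [f]
    rw [slope_def_field, f_eq hY hα, hf0]
    set s := Real.sqrt (α * |w| + 1) with hsdef
    have hs0 : 0 < s := Real.sqrt_pos.2 (by positivity)
    have hne : 1 + s ≠ 0 := by positivity
    field_simp
    ring
  have hcont : ContinuousAt (fun w : ℝ =>
      Y * α / (1 + Real.sqrt (α * |w| + 1)) *
        (Y * α * w / (1 + Real.sqrt (α * |w| + 1)) - 2 * y)) 0 := by
    have hsc : Continuous (fun w : ℝ => Real.sqrt (α * |w| + 1)) :=
      Real.continuous_sqrt.comp (by continuity)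
    have hne : (1 : ℝ) + Real.sqrt (α * |(0:ℝ)| + 1) ≠ 0 := by
      have : 0 < Real.sqrt (α * |(0:ℝ)| + 1) := Real.sqrt_pos.2 (by norm_num)
      positivity
    exact ContinuousAt.mul
      (ContinuousAt.div continuousAt_const ((continuous_const.add hsc).continuousAt) hne)
      (ContinuousAt.sub
        (ContinuousAt.div (by fun_prop) ((continuous_const.add hsc).continuousAt) hne)
        continuousAt_const)
  have hF0 : Y * α / (1 + Real.sqrt (α * |(0:ℝ)| + 1)) *
        (Y * α * (0:ℝ) / (1 + Real.sqrt (α * |(0:ℝ)| + 1)) - 2 * y) = D Y α y 0 := by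
    rw [D, if_pos le_rfl]
    norm_num
    ring
  have h1 : Tendsto (fun w : ℝ =>
      Y * α / (1 + Real.sqrt (α * |w| + 1)) *
        (Y * α * w / (1 + Real.sqrt (α * |w| + 1)) - 2 * y))
      (nhdsWithin 0 {(0:ℝ)}ᶜ) (nhds (D Y α y 0)) := by
    rw [← hF0]
    exact hcont.continuousWithinAt.tendsto
  refine h1.congr' ?_
  filter_upwards [self_mem_nhdsWithin] with w hw
  exact (hslope w hw).symm

lemma hasDerivAt_all (hY : 0 < Y) (hα : 0 < α) (z : ℝ) :
    HasDerivAt (fun z => (f Y α y z) ^ 2) (D Y α y z) z := by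
  rcases lt_trichotomy z 0 with h | h | h
  · exact hasDerivAt_neg hY hα h
  · subst h; exact hasDerivAt_zero hY hα
  · exact hasDerivAt_pos hY hα h

lemma D_monotone (hY : 0 < Y) (hα : 0 < α) (hy1 : -Y ≤ y) (hy2 : y ≤ Y) :
    Monotone (D Y α y) := by
  have hmid : ∀ z : ℝ, 0 ≤ z → Y * α * (-y) ≤ D Y α y z := by
    intro z hz
    rw [D, if_pos hz]
    have hs1 : (1:ℝ) ≤ Real.sqrt (α * z + 1) := by
      rw [Real.one_le_sqrt]; nlinarith
    have hs0 : (0:ℝ) < Real.sqrt (α * z + 1) := by linarith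
    have : (Y + y) / Real.sqrt (α * z + 1) ≤ (Y + y) / 1 := by
      gcongr; linarith
    have h2 : -y ≤ Y - (Y + y) / Real.sqrt (α * z + 1) := by
      rw [div_one] at this; linarith
    exact mul_le_mul_of_nonneg_left h2 (mul_nonneg hY.le hα.le)
  have hmid' : ∀ z : ℝ, z < 0 → D Y α y z ≤ Y * α * (-y) := by
    intro z hz
    rw [D, if_neg (not_le.2 hz)]
    have hs1 : (1:ℝ) ≤ Real.sqrt (α * (-z) + 1) := by
      rw [Real.one_le_sqrt]; nlinarith
    have hs0 : (0:ℝ) < Real.sqrt (α * (-z) + 1) := by linarith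
    have : (Y - y) / Real.sqrt (α * (-z) + 1) ≤ (Y - y) / 1 := by
      gcongr
    rw [div_one] at this
    exact mul_le_mul_of_nonneg_left (by linarith : (Y - y) / Real.sqrt (α * (-z) + 1) - Y ≤ -y)
      (mul_nonneg hY.le hα.le)
  intro a b hab
  rcases le_or_gt 0 a with ha | ha
  · have hb : 0 ≤ b := le_trans ha hab
    rw [D, if_pos ha, D, if_pos hb]
    have hsa : (0:ℝ) < Real.sqrt (α * a + 1) := Real.sqrt_pos.2 (by positivity)
    have hsab : Real.sqrt (α * a + 1) ≤ Real.sqrt (α * b + 1) :=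
      Real.sqrt_le_sqrt (by nlinarith)
    have h1 : (Y + y) / Real.sqrt (α * b + 1) ≤ (Y + y) / Real.sqrt (α * a + 1) := by
      gcongr; linarith
    exact mul_le_mul_of_nonneg_left (by linarith) (mul_nonneg hY.le hα.le)
  · rcases le_or_gt 0 b with hb | hb
    · exact le_trans (hmid' a ha) (hmid b hb)
    · rw [D, if_neg (not_le.2 ha), D, if_neg (not_le.2 hb)]
      have hsb : (0:ℝ) < Real.sqrt (α * (-b) + 1) :=
        Real.sqrt_pos.2 (by nlinarith [mul_pos hα (neg_pos.2 hb)])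
      have hsab : Real.sqrt (α * (-b) + 1) ≤ Real.sqrt (α * (-a) + 1) :=
        Real.sqrt_le_sqrt (by nlinarith)
      have h1 : (Y - y) / Real.sqrt (α * (-a) + 1) ≤ (Y - y) / Real.sqrt (α * (-b) + 1) := by
        gcongr
      exact mul_le_mul_of_nonneg_left (by linarith) (mul_nonneg hY.le hα.le)

lemma scalar_convex (hY : 0 < Y) (hα : 0 < α) (hy1 : -Y ≤ y) (hy2 : y ≤ Y) :
    ConvexOn ℝ Set.univ (fun z : ℝ =>
      (Real.sign z * (Y * Real.sqrt (α * |z| + 1) - Y) - y) ^ 2) := by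
  have hd : ∀ z, HasDerivAt (fun z => (f Y α y z) ^ 2) (D Y α y z) z :=
    hasDerivAt_all hY hα
  have hdiff : Differentiable ℝ (fun z => (f Y α y z) ^ 2) :=
    fun z => (hd z).differentiableAt
  have hderiv : deriv (fun z => (f Y α y z) ^ 2) = D Y α y :=
    funext fun z => (hd z).deriv
  have := Monotone.convexOn_univ_of_deriv hdiff
    (hderiv ▸ D_monotone hY hα hy1 hy2)
  simpa [f] using this

lemma convexOn_sum {ι : Type*} (t : Finset ι) {E : Type*} [AddCommGroup E] [Module ℝ E]
    (g : ι → E → ℝ) (hg : ∀ i ∈ t, ConvexOn ℝ Set.univ (g i)) :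
    ConvexOn ℝ Set.univ (fun w => ∑ i ∈ t, g i w) := by
  classical
  induction t using Finset.induction_on with
  | empty => simpa using convexOn_const 0 convex_univ
  | insert a s hni ih =>
    simp only [Finset.sum_insert hni]
    exact (hg a (Finset.mem_insert_self a s)).add
      (ih fun i hi => hg i (Finset.mem_insert_of_mem hi))

lemma comp_linear {d : ℕ} (x : Fin d → ℝ) {φ : ℝ → ℝ}
    (hφ : ConvexOn ℝ Set.univ φ) :
    ConvexOn ℝ Set.univ (fun w : Fin d → ℝ => φ (∑ i, w i * x i)) := by
  refine ⟨convex_univ, fun u _ v _ a b ha hb hab => ?_⟩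
  have hlin : ∑ i, (a • u + b • v) i * x i
      = a • (∑ i, u i * x i) + b • (∑ i, v i * x i) := by
    simp only [Pi.add_apply, Pi.smul_apply, smul_eq_mul, add_mul,
      Finset.sum_add_distrib, Finset.mul_sum, mul_assoc]
  dsimp only
  rw [hlin]
  exact hφ.2 (Set.mem_univ _) (Set.mem_univ _) ha hb hab

end Stmt11Aux

/-- With targets in `[-Y, Y]`, the cumulative squared loss
`L(w) = ∑ₙ (g ⟨w, xₙ⟩ - yₙ)²` with the square-root transform `g` is convex on ℝ^d. -/
theorem stmt11 (d N : ℕ) (Y α : ℝ) (hY : 0 < Y) (hα : 0 < α)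
    (y : Fin N → ℝ) (hy : ∀ n, -Y ≤ y n ∧ y n ≤ Y) (x : Fin N → Fin d → ℝ) :
    ConvexOn ℝ Set.univ (fun w : Fin d → ℝ =>
      ∑ n, (Real.sign (∑ i, w i * x n i)
        * (Y * Real.sqrt (α * |∑ i, w i * x n i| + 1) - Y) - y n) ^ 2) := by
  exact Stmt11Aux.convexOn_sum Finset.univ
    (fun n (w : Fin d → ℝ) => (Real.sign (∑ i, w i * x n i)
        * (Y * Real.sqrt (α * |∑ i, w i * x n i| + 1) - Y) - y n) ^ 2)
    (fun n _ => Stmt11Aux.comp_linear (x n)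
      (Stmt11Aux.scalar_convex hY hα (hy n).1 (hy n).2))
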